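/- Let M be an infinite type and E an equivalence relation on Set M that is bicardinality coarsening, i.e. E X Y holds whenever Cardinal.mk X = Cardinal.mk Y and Cardinal.mk ↥(Xᶜ) = Cardinal.mk ↥(Yᶜ). Then there exists a function ∂ : Set M → M realizing A[E]; that is, A[E] has a standard model on every infinite domain. -/
import Mathlib

universe u

open Cardinal Set

private lemma mk_Iic_cardinal_le {κ : Cardinal.{u}} (hκ : ℵ₀ ≤ κ) :
    #(Set.Iic κ) ≤ Cardinal.lift.{u+1} κ := by
  have h1 : #(Set.Iic κ) ≤ #(Set.Iio (Order.succ κ.ord)) := by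
    apply Cardinal.mk_le_of_injective (f := fun c =>
      ⟨(c : Cardinal).ord, lt_of_le_of_lt (Cardinal.ord_le_ord.2 c.2) (Order.lt_succ _)⟩)
    intro a b hab
    apply Subtype.ext
    have := congrArg Subtype.val hab
    simpa using Cardinal.ord_injective this
  calc #(Set.Iic κ) ≤ #(Set.Iio (Order.succ κ.ord)) := h1
    _ = Cardinal.lift.{u+1} ((Order.succ κ.ord).card) := Ordinal.mk_Iio_ordinal _
    _ = Cardinal.lift.{u+1} κ := by
        rw [Ordinal.card_succ, Cardinal.card_ord, Cardinal.add_one_eq hκ]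

/-- If `E` is bicardinality coarsening, then `A[E]` has a standard model on every infinite
domain. -/
theorem exists_realization_of_bicardinalityCoarsening {M : Type u} [Infinite M]
    (E : Set M → Set M → Prop) (hE : Equivalence E)
    (hbc : ∀ X Y : Set M, Cardinal.mk X = Cardinal.mk Y →
      Cardinal.mk ↥(Xᶜ) = Cardinal.mk ↥(Yᶜ) → E X Y) :
    ∃ d : Set M → M, ∀ X Y : Set M, d X = d Y ↔ E X Y := by
  let s : Setoid (Set M) := ⟨E, hE⟩
  -- the bicardinality invariant
  let f : Set M → Cardinal.{u} × Cardinal.{u} := fun X => (#X, #(↥(Xᶜ)))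
  -- a surjection from the range of f onto the quotient
  have hsurj : Function.Surjective
      (fun c : Set.range f => Quotient.mk s (Classical.choose c.2)) := by
    intro q
    induction q using Quotient.inductionOn with
    | h X =>
      refine ⟨⟨f X, X, rfl⟩, ?_⟩
      apply Quotient.sound
      have hspec := Classical.choose_spec (⟨X, rfl⟩ : f X ∈ Set.range f)
      have h1 : #(↥(Classical.choose (⟨X, rfl⟩ : f X ∈ Set.range f))) = #X :=
        congrArg Prod.fst hspec
      have h2 : #(↥((Classical.choose (⟨X, rfl⟩ : f X ∈ Set.range f))ᶜ)) = #(↥(Xᶜ)) :=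
        congrArg Prod.snd hspec
      exact hbc _ _ h1 h2
  -- hence the quotient is small
  have hq : #(Quotient s) ≤ #M := by
    obtain ⟨emb⟩ : Nonempty (Quotient s ↪ Set.range f) :=
      ⟨Function.Embedding.ofSurjective _ hsurj⟩
    have hle : Cardinal.lift.{u+1} #(Quotient s) ≤ Cardinal.lift.{u} #(Set.range f) :=
      Cardinal.lift_mk_le'.2 ⟨emb⟩
    have hrange : #(Set.range f) ≤ Cardinal.lift.{u+1} #M := by
      have hsub : Set.range f ⊆ Set.Iic #M ×ˢ Set.Iic #M := by
        rintro ⟨a, b⟩ ⟨X, hX⟩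
        obtain ⟨rfl, rfl⟩ := Prod.mk.injEq .. ▸ hX
        exact ⟨Cardinal.mk_set_le X, Cardinal.mk_set_le Xᶜ⟩
      calc #(Set.range f) ≤ #(Set.Iic #M ×ˢ Set.Iic #M : Set (Cardinal × Cardinal)) :=
            Cardinal.mk_le_mk_of_subset hsub
        _ = #(Set.Iic (#M)) * #(Set.Iic (#M)) := by
            rw [Cardinal.mk_congr (Equiv.Set.prod _ _)]; simp [Cardinal.mk_prod]
        _ ≤ Cardinal.lift.{u+1} #M * Cardinal.lift.{u+1} #M := by
            apply mul_le_mul' <;> exact mk_Iic_cardinal_le (Cardinal.aleph0_le_mk M)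
        _ = Cardinal.lift.{u+1} #M := by
            apply Cardinal.mul_eq_self
            simp [Cardinal.aleph0_le_mk]
    have h2 : Cardinal.lift.{u, u+1} #(Set.range f) ≤ Cardinal.lift.{u+1} #M := by
      rw [Cardinal.lift_id'.{u, u+1}]; exact hrange
    exact Cardinal.lift_le.1 (hle.trans h2)
  obtain ⟨emb⟩ : Nonempty (Quotient s ↪ M) := Cardinal.le_def _ _ |>.1 hq
  refine ⟨fun X => emb (Quotient.mk s X), fun X Y => ?_⟩
  rw [emb.injective.eq_iff, Quotient.eq]
  rfl
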